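/- For any Hurewicz fibration p : E → B of metric spaces, dsecat(p) ≤ asecat(p): the distributional sectional category is bounded above by the analog sectional category. Consequently, dcat(X) ≤ acat(X) and dTC_m(X) ≤ ATC_m(X) for all m ≥ 2. -/

import Mathlib

open MeasureTheory unitInterval

noncomputable section

/-- The path space `P(X) = C([0,1], X)` with the compact-open topology. -/
abbrev PathSp (X : Type*) [TopologicalSpace X] : Type _ := C(unitInterval, X)

/-- The space `B_n(Z)` of probability measures on a metric space `Z` supported on at most
`n` points, as a subspace of the space of probability measures with the Lévy–Prokhorov metric. -/
def Bmeas (n : ℕ) (Z : Type*) [MetricSpace Z] : Type _ :=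
  letI : MeasurableSpace Z := borel Z
  {μ : LevyProkhorov (ProbabilityMeasure Z) //
    ∃ S : Finset Z, S.card ≤ n ∧ (LevyProkhorov.toMeasureEquiv μ : ProbabilityMeasure Z) (↑S : Set Z) = 1}

noncomputable instance (n : ℕ) (Z : Type*) [MetricSpace Z] : TopologicalSpace (Bmeas n Z) :=
  letI : MeasurableSpace Z := borel Z
  haveI : BorelSpace Z := ⟨rfl⟩
  instTopologicalSpaceSubtype

/-- The underlying probability measure of an element of `B_n(Z)`. -/
def Bmeas.meas {n : ℕ} {Z : Type*} [MetricSpace Z] (μ : Bmeas n Z) :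
    @ProbabilityMeasure Z (borel Z) :=
  LevyProkhorov.toMeasureEquiv μ.1

/-- `μ ∈ B_n(Z)` is supported on the set `A`. -/
def DistributedOn {Z : Type*} [MetricSpace Z] {n : ℕ} (μ : Bmeas n Z) (A : Set Z) : Prop :=
  ∃ S : Finset Z, (↑S : Set Z) ⊆ A ∧ Bmeas.meas μ (↑S : Set Z) = 1

/-- The time points `t_j = j/(m-1)`, `j = 0, …, m-1`, in `[0,1]`. -/
def tpt (m : ℕ) (j : Fin m) : unitInterval :=
  Set.projIcc 0 1 zero_le_one ((j : ℝ) / ((m : ℝ) - 1))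

/-- A `k`-distributed `m`-navigation algorithm on `X`. -/
def IsNavAlg (m k : ℕ) {X : Type*} [MetricSpace X]
    (s : (Fin m → X) → Bmeas k (PathSp X)) : Prop :=
  Continuous s ∧ ∀ x : Fin m → X,
    DistributedOn (s x) {φ : PathSp X | ∀ j : Fin m, φ (tpt m j) = x j}

/-- The `m`-th sequential distributional topological complexity. -/
noncomputable def dTC (m : ℕ) (X : Type*) [MetricSpace X] : ℕ∞ :=
  sInf {c : ℕ∞ | ∃ k : ℕ, c = k ∧
    ∃ s : (Fin m → X) → Bmeas (k + 1) (PathSp X), IsNavAlg m (k + 1) s}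

/-- A `k`-contraction of `Y` to the point `y₀`. -/
def IsContr (k : ℕ) {Y : Type*} [MetricSpace Y] (y₀ : Y)
    (H : Y → Bmeas k (PathSp Y)) : Prop :=
  Continuous H ∧ ∀ y : Y,
    DistributedOn (H y) {φ : PathSp Y | φ 0 = y ∧ φ 1 = y₀}

/-- The distributional Lusternik–Schnirelmann category. -/
noncomputable def dcat (Y : Type*) [MetricSpace Y] : ℕ∞ :=
  sInf {c : ℕ∞ | ∃ k : ℕ, c = k ∧
    ∃ (y₀ : Y) (H : Y → Bmeas (k + 1) (PathSp Y)), IsContr (k + 1) y₀ H}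

/-- The classical `m`-th sequential topological complexity. -/
noncomputable def TCcl (m : ℕ) (X : Type*) [TopologicalSpace X] : ℕ∞ :=
  sInf {c : ℕ∞ | ∃ k : ℕ, c = k ∧
    ∃ (U : Fin (k + 1) → Set (Fin m → X)) (s : ∀ i : Fin (k + 1), C(U i, PathSp X)),
      (∀ i, IsOpen (U i)) ∧ (∀ x, ∃ i, x ∈ U i) ∧
      ∀ (i : Fin (k + 1)) (x : U i) (j : Fin m), (s i x) (tpt m j) = (x : Fin m → X) j}

/-- The homotopy lifting property with respect to all spaces (Hurewicz fibration). -/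
def IsHurFib {E B : Type*} [TopologicalSpace E] [TopologicalSpace B] (p : E → B) : Prop :=
  ∀ (Z : Type) [TopologicalSpace Z] (f : C(Z, E)) (H : C(Z × unitInterval, B)),
    (∀ z, H (z, 0) = p (f z)) →
      ∃ G : C(Z × unitInterval, E),
        (∀ z t, p (G (z, t)) = H (z, t)) ∧ ∀ z, G (z, 0) = f z

/-- `E_k(p)`: the space of probability measures supported on at most `k` points of a
single fiber of `p`, as a subspace of `B_k(E)`. -/
def FibMeas (k : ℕ) {E B : Type*} [MetricSpace E] (p : E → B) : Type _ :=
  {μ : Bmeas k E // ∃ b : B, DistributedOn μ (p ⁻¹' {b})}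

instance (k : ℕ) {E B : Type*} [MetricSpace E] (p : E → B) :
    TopologicalSpace (FibMeas k p) := instTopologicalSpaceSubtype

/-- The map `B_k(p) : E_k(p) → B` sending a fiberwise supported measure to its base point. -/
noncomputable def fibProj (k : ℕ) {E B : Type*} [MetricSpace E] (p : E → B)
    (μ : FibMeas k p) : B :=
  Classical.choose μ.2

/-- The distributional sectional category of a map `p : E → B`. -/
noncomputable def dsecat {E B : Type*} [MetricSpace E] [MetricSpace B] (p : E → B) : ℕ∞ :=
  sInf {c : ℕ∞ | ∃ k : ℕ, c = k ∧
    ∃ s : B → FibMeas (k + 1) p, Continuous s ∧ ∀ b, fibProj (k + 1) p (s b) = b}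

/-- The fibration `π_m : P(X) → X^m`, `φ ↦ (φ(t_1), …, φ(t_m))`. -/
def piFib (m : ℕ) (X : Type*) [TopologicalSpace X] (φ : PathSp X) : Fin m → X :=
  fun j => φ (tpt m j)

/-- Raw data for formal probability measures supported on at most `n` points:
the disjoint union `⨆_{i=1}^{n} E^i × Δ^{i-1}`. -/
def rawP (n : ℕ) (E : Type*) : Type _ :=
  Σ i : Fin n, (Fin ((i : ℕ) + 1) → E) × (stdSimplex ℝ (Fin ((i : ℕ) + 1)))

instance (n : ℕ) (E : Type*) [TopologicalSpace E] : TopologicalSpace (rawP n E) :=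
  inferInstanceAs (TopologicalSpace
    (Σ i : Fin n, (Fin ((i : ℕ) + 1) → E) × (stdSimplex ℝ (Fin ((i : ℕ) + 1)))))

open Classical in
/-- The mass function of a raw weighted tuple. -/
noncomputable def massOfRaw {n : ℕ} {E : Type*} (z : rawP n E) (x : E) : ℝ :=
  ∑ j, if z.2.1 j = x then (z.2.2 : Fin ((z.1 : ℕ) + 1) → ℝ) j else 0

/-- Two raw tuples are identified iff they represent the same formal measure; this is the
equivalence generated by permutations, merging of repeated points and dropping of
zero weights. -/
def Psetoid (n : ℕ) (E : Type*) : Setoid (rawP n E) := Setoid.ker massOfRaw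

/-- The space `𝒫_n(E)` of formal probability measures supported on at most `n` points,
with the quotient topology `𝒯₁`. -/
def PmeasA (n : ℕ) (E : Type*) [TopologicalSpace E] : Type _ := Quotient (Psetoid n E)

instance (n : ℕ) (E : Type*) [TopologicalSpace E] : TopologicalSpace (PmeasA n E) :=
  instTopologicalSpaceQuotient

/-- The mass function of a formal measure. -/
noncomputable def PmeasA.mass {n : ℕ} {E : Type*} [TopologicalSpace E] :
    PmeasA n E → E → ℝ :=
  Quotient.lift massOfRaw (fun _ _ h => h)

/-- `𝒫_n(p)`: the subspace of formal measures supported in a single fiber of `p`. -/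
def PmeasFib (n : ℕ) {E B : Type*} [TopologicalSpace E] (p : E → B) : Type _ :=
  {μ : PmeasA n E // ∃ b : B, ∀ x : E, PmeasA.mass μ x ≠ 0 → p x = b}

instance (n : ℕ) {E B : Type*} [TopologicalSpace E] (p : E → B) :
    TopologicalSpace (PmeasFib n p) := instTopologicalSpaceSubtype

/-- The map `φ_n(p) : 𝒫_n(p) → B`. -/
noncomputable def phiMap (n : ℕ) {E B : Type*} [TopologicalSpace E] (p : E → B)
    (μ : PmeasFib n p) : B :=
  Classical.choose μ.2

/-- The analog sectional category of a map `p : E → B`. -/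
noncomputable def asecat {E B : Type*} [TopologicalSpace E] [TopologicalSpace B]
    (p : E → B) : ℕ∞ :=
  sInf {c : ℕ∞ | ∃ k : ℕ, c = k ∧
    ∃ s : B → PmeasFib (k + 1) p, Continuous s ∧ ∀ b, phiMap (k + 1) p (s b) = b}

/-- The space `P_0(X)` of paths ending at `x₀`. -/
def Pend (X : Type*) [MetricSpace X] (x₀ : X) : Type _ := {φ : PathSp X // φ 1 = x₀}

instance (X : Type*) [MetricSpace X] (x₀ : X) : MetricSpace (Pend X x₀) :=
  Subtype.metricSpace

/-- `p_0 : P_0(X) → X`, evaluation at time `0`. -/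
def pZero (X : Type*) [MetricSpace X] (x₀ : X) (φ : Pend X x₀) : X := φ.1 0

set_option linter.unusedSectionVars false

section Aux

open ENNReal

variable {Z W : Type*} [MetricSpace Z] [MetricSpace W]

lemma wts_nonneg {n : ℕ} (z : rawP n Z) (j : Fin ((z.1 : ℕ) + 1)) :
    0 ≤ (z.2.2 : Fin ((z.1 : ℕ) + 1) → ℝ) j := z.2.2.2.1 j

lemma wts_sum {n : ℕ} (z : rawP n Z) :
    ∑ j, (z.2.2 : Fin ((z.1 : ℕ) + 1) → ℝ) j = 1 := z.2.2.2.2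

lemma mass_nonneg {n : ℕ} (z : rawP n Z) (x : Z) : 0 ≤ massOfRaw z x := by
  apply Finset.sum_nonneg
  intro j _
  split_ifs <;> simp [wts_nonneg z j]

lemma wts_le_mass {n : ℕ} (z : rawP n Z) (j : Fin ((z.1 : ℕ) + 1)) :
    (z.2.2 : Fin ((z.1 : ℕ) + 1) → ℝ) j ≤ massOfRaw z (z.2.1 j) := by
  classical
  have h := Finset.single_le_sum
    (f := fun i => if z.2.1 i = z.2.1 j then (z.2.2 : Fin ((z.1 : ℕ) + 1) → ℝ) i else 0)
    (fun i _ => by split_ifs <;> simp [wts_nonneg z i]) (Finset.mem_univ j)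
  simpa [massOfRaw] using h

section Meas

variable [MeasurableSpace W] [BorelSpace W]

/-- The actual measure represented by a raw tuple. -/
noncomputable def rawMeas {n : ℕ} (z : rawP n W) : MeasureTheory.Measure W :=
  ∑ j, ENNReal.ofReal ((z.2.2 : Fin ((z.1 : ℕ) + 1) → ℝ) j) • MeasureTheory.Measure.dirac (z.2.1 j)

open Classical in
lemma rawMeas_apply {n : ℕ} (z : rawP n W) (A : Set W) :
    rawMeas z A = ∑ j, if z.2.1 j ∈ A
      then ENNReal.ofReal ((z.2.2 : Fin ((z.1 : ℕ) + 1) → ℝ) j) else 0 := by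
  rw [rawMeas, MeasureTheory.Measure.finset_sum_apply]
  refine Finset.sum_congr rfl fun j _ => ?_
  rw [MeasureTheory.Measure.smul_apply, MeasureTheory.Measure.dirac_apply, smul_eq_mul,
    Set.indicator_apply]
  split_ifs <;> simp

lemma rawMeas_univ {n : ℕ} (z : rawP n W) : rawMeas z Set.univ = 1 := by
  rw [rawMeas_apply]
  simp only [Set.mem_univ, if_true]
  rw [← ENNReal.ofReal_sum_of_nonneg (fun j _ => wts_nonneg z j), wts_sum, ENNReal.ofReal_one]

lemma rawMeas_isProb {n : ℕ} (z : rawP n W) :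
    MeasureTheory.IsProbabilityMeasure (rawMeas z) := ⟨rawMeas_univ z⟩

open Classical in
lemma rawMeas_eq_massSum {n : ℕ} (z : rawP n W) (T : Finset W) (hT : ∀ j, z.2.1 j ∈ T)
    (A : Set W) :
    rawMeas z A = ∑ y ∈ T, if y ∈ A then ENNReal.ofReal (massOfRaw z y) else 0 := by
  rw [rawMeas_apply, ← Finset.sum_fiberwise_of_maps_to (g := z.2.1) (fun j _ => hT j)]
  refine Finset.sum_congr rfl fun y _ => ?_
  by_cases hy : y ∈ A
  · rw [if_pos hy]
    have h1 : ∀ j ∈ Finset.univ.filter (fun j => z.2.1 j = y),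
        (if z.2.1 j ∈ A then ENNReal.ofReal ((z.2.2 : Fin ((z.1 : ℕ) + 1) → ℝ) j) else 0)
          = ENNReal.ofReal ((z.2.2 : Fin ((z.1 : ℕ) + 1) → ℝ) j) := by
      intro j hj
      rw [Finset.mem_filter] at hj
      rw [if_pos (hj.2 ▸ hy)]
    rw [Finset.sum_congr rfl h1,
      ← ENNReal.ofReal_sum_of_nonneg (fun j _ => wts_nonneg z j)]
    congr 1
    unfold massOfRaw
    rw [Finset.sum_filter]
  · rw [if_neg hy]
    apply Finset.sum_eq_zero
    intro j hj
    rw [Finset.mem_filter] at hj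
    rw [if_neg (by rw [hj.2]; exact hy)]

lemma rawMeas_congr {n : ℕ} {z z' : rawP n W} (h : massOfRaw z = massOfRaw z') :
    rawMeas z = rawMeas z' := by
  classical
  ext A hA
  set T : Finset W := Finset.image z.2.1 Finset.univ ∪ Finset.image z'.2.1 Finset.univ with hTdef
  rw [rawMeas_eq_massSum z T (fun j => Finset.mem_union_left _
      (Finset.mem_image_of_mem _ (Finset.mem_univ j))) A,
    rawMeas_eq_massSum z' T (fun j => Finset.mem_union_right _
      (Finset.mem_image_of_mem _ (Finset.mem_univ j))) A, h]

/-- The raw tuple as a point of the Lévy–Prokhorov space. -/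
noncomputable def rawLP {n : ℕ} (z : rawP n W) :
    LevyProkhorov (MeasureTheory.ProbabilityMeasure W) :=
  LevyProkhorov.toMeasureEquiv.symm ⟨rawMeas z, rawMeas_isProb z⟩

lemma rawLP_congr {n : ℕ} {z z' : rawP n W} (h : massOfRaw z = massOfRaw z') :
    rawLP z = rawLP z' := by
  unfold rawLP
  congr 1
  exact MeasureTheory.ProbabilityMeasure.toMeasure_injective (rawMeas_congr h)

lemma lp_dist_le {n : ℕ} {i : Fin n}
    (a b : (Fin ((i : ℕ) + 1) → W) × (stdSimplex ℝ (Fin ((i : ℕ) + 1)))) {δ : ℝ}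
    (hδ : 0 ≤ δ) (hx : ∀ j, dist (a.1 j) (b.1 j) ≤ δ)
    (hw : ∑ j, |(a.2 : Fin ((i : ℕ) + 1) → ℝ) j - (b.2 : Fin ((i : ℕ) + 1) → ℝ) j| ≤ δ) :
    dist (rawLP (⟨i, a⟩ : rawP n W)) (rawLP (⟨i, b⟩ : rawP n W)) ≤ δ := by
  classical
  haveI hpa := rawMeas_isProb (⟨i, a⟩ : rawP n W)
  haveI hpb := rawMeas_isProb (⟨i, b⟩ : rawP n W)
  rw [LevyProkhorov.dist_probabilityMeasure_def]
  apply MeasureTheory.levyProkhorovDist_le_of_forall_le _ _ hδ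
  intro ε A hε hA
  have key : rawMeas (⟨i, a⟩ : rawP n W) A
      ≤ rawMeas (⟨i, b⟩ : rawP n W) (Metric.thickening ε A)
        + ENNReal.ofReal (∑ j, |(a.2 : Fin ((i : ℕ) + 1) → ℝ) j
            - (b.2 : Fin ((i : ℕ) + 1) → ℝ) j|) := by
    erw [rawMeas_apply, rawMeas_apply,
      ENNReal.ofReal_sum_of_nonneg (fun j _ => abs_nonneg _), ← Finset.sum_add_distrib]
    apply Finset.sum_le_sum
    intro j _
    show (if a.1 j ∈ A then ENNReal.ofReal ((a.2 : Fin ((i : ℕ) + 1) → ℝ) j) else 0) ≤ _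
    by_cases hj : a.1 j ∈ A
    · rw [if_pos hj]
      have hmem : b.1 j ∈ Metric.thickening ε A := by
        rw [Metric.mem_thickening_iff]
        exact ⟨a.1 j, hj, by rw [dist_comm]; exact lt_of_le_of_lt (hx j) hε⟩
      show _ ≤ (if b.1 j ∈ Metric.thickening ε A
        then ENNReal.ofReal ((b.2 : Fin ((i : ℕ) + 1) → ℝ) j) else 0) + _
      rw [if_pos hmem]
      calc ENNReal.ofReal ((a.2 : Fin ((i : ℕ) + 1) → ℝ) j)
          ≤ ENNReal.ofReal ((b.2 : Fin ((i : ℕ) + 1) → ℝ) j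
              + |(a.2 : Fin ((i : ℕ) + 1) → ℝ) j - (b.2 : Fin ((i : ℕ) + 1) → ℝ) j|) := by
            apply ENNReal.ofReal_le_ofReal
            have h1 := le_abs_self ((a.2 : Fin ((i : ℕ) + 1) → ℝ) j
              - (b.2 : Fin ((i : ℕ) + 1) → ℝ) j)
            linarith
        _ = _ := ENNReal.ofReal_add (b.2.2.1 j) (abs_nonneg _)
    · rw [if_neg hj]
      exact zero_le
  refine key.trans (add_le_add_right ?_ _)
  exact ENNReal.ofReal_le_ofReal (hw.trans hε.le)

lemma continuous_rawLP (n : ℕ) : Continuous (rawLP (W := W) (n := n)) := by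
  apply continuous_sigma
  intro i
  rw [Metric.continuous_iff]
  intro a ε hε
  have hi1 : (0 : ℝ) < (i : ℕ) + 1 := by positivity
  refine ⟨ε / (2 * ((i : ℕ) + 1)), by positivity, fun b hb => ?_⟩
  have key : dist (rawLP (⟨i, b⟩ : rawP n W)) (rawLP (⟨i, a⟩ : rawP n W)) ≤ ε / 2 := by
    refine lp_dist_le _ _ (by positivity) ?_ ?_
    · intro j
      calc dist (b.1 j) (a.1 j) ≤ dist b.1 a.1 := dist_le_pi_dist _ _ j
        _ ≤ dist b a := le_max_left _ _
        _ ≤ ε / (2 * ((i : ℕ) + 1)) := hb.le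
        _ ≤ ε / 2 := by
            apply div_le_div_of_nonneg_left hε.le (by norm_num)
            nlinarith [Nat.cast_nonneg (α := ℝ) (i : ℕ)]
    · have hterm : ∀ j : Fin ((i : ℕ) + 1),
          |(b.2 : Fin ((i : ℕ) + 1) → ℝ) j - (a.2 : Fin ((i : ℕ) + 1) → ℝ) j|
            ≤ ε / (2 * ((i : ℕ) + 1)) := by
        intro j
        calc |(b.2 : Fin ((i : ℕ) + 1) → ℝ) j - (a.2 : Fin ((i : ℕ) + 1) → ℝ) j|
            = dist ((b.2 : Fin ((i : ℕ) + 1) → ℝ) j) ((a.2 : Fin ((i : ℕ) + 1) → ℝ) j) := by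
              rw [Real.dist_eq]
          _ ≤ dist (b.2 : Fin ((i : ℕ) + 1) → ℝ) (a.2 : Fin ((i : ℕ) + 1) → ℝ) :=
              dist_le_pi_dist _ _ j
          _ ≤ dist b a := le_max_right _ _
          _ ≤ ε / (2 * ((i : ℕ) + 1)) := hb.le
      calc ∑ j, |(b.2 : Fin ((i : ℕ) + 1) → ℝ) j - (a.2 : Fin ((i : ℕ) + 1) → ℝ) j|
          ≤ ∑ _j : Fin ((i : ℕ) + 1), ε / (2 * ((i : ℕ) + 1)) :=
            Finset.sum_le_sum fun j _ => hterm j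
        _ = ((i : ℕ) + 1) * (ε / (2 * ((i : ℕ) + 1))) := by
            rw [Finset.sum_const, Finset.card_univ, Fintype.card_fin, nsmul_eq_mul]
            push_cast
            ring
        _ = ε / 2 := by field_simp
  calc dist (rawLP (⟨i, b⟩ : rawP n W)) (rawLP (⟨i, a⟩ : rawP n W)) ≤ ε / 2 := key
    _ < ε := by linarith

end Meas

/-- Pushing a raw tuple forward along a map. -/
def pushRaw {n : ℕ} (f : Z → W) (z : rawP n Z) : rawP n W := ⟨z.1, f ∘ z.2.1, z.2.2⟩

lemma continuous_pushRaw {n : ℕ} {f : Z → W} (hf : Continuous f) :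
    Continuous (pushRaw (n := n) f) := by
  apply continuous_sigma
  intro i
  exact continuous_sigmaMk.comp
    ((continuous_pi fun j => hf.comp ((continuous_apply j).comp continuous_fst)).prodMk
      continuous_snd)

lemma massOfRaw_pushRaw_comp {n : ℕ} {f : Z → W} (hf : Function.Injective f)
    (z : rawP n Z) (x : Z) : massOfRaw (pushRaw f z) (f x) = massOfRaw z x := by
  refine Finset.sum_congr rfl fun j _ => ?_
  by_cases h : z.2.1 j = x
  · rw [if_pos (show (pushRaw f z).2.1 j = f x from congrArg f h), if_pos h]
    rfl
  · rw [if_neg (show ¬ (pushRaw f z).2.1 j = f x from fun hc => h (hf hc)), if_neg h]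

lemma massOfRaw_pushRaw_of_not_mem {n : ℕ} (f : Z → W) (z : rawP n Z) (y : W)
    (hy : ∀ x, f x ≠ y) : massOfRaw (pushRaw f z) y = 0 := by
  apply Finset.sum_eq_zero
  intro j _
  exact if_neg (hy (z.2.1 j))

lemma mass_push_congr {n : ℕ} {f : Z → W} (hf : Function.Injective f) {z z' : rawP n Z}
    (h : massOfRaw z = massOfRaw z') :
    massOfRaw (pushRaw f z) = massOfRaw (pushRaw f z') := by
  funext y
  by_cases hy : ∃ x, f x = y
  · obtain ⟨x, rfl⟩ := hy
    rw [massOfRaw_pushRaw_comp hf, massOfRaw_pushRaw_comp hf, h]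
  · push_neg at hy
    rw [massOfRaw_pushRaw_of_not_mem f z y hy, massOfRaw_pushRaw_of_not_mem f z' y hy]

end Aux
section Bridge

variable {Z W : Type*} [MetricSpace Z] [MetricSpace W]

/-- Support lemma for pushed raw measures. -/
lemma rawLP_support {n : ℕ} [MeasurableSpace W] [BorelSpace W] (f : Z → W) (z : rawP n Z) :
    ∃ S : Finset W, S.card ≤ n ∧ ((S : Set W) ⊆ f '' {x | massOfRaw z x ≠ 0}) ∧
      rawMeas (pushRaw f z) (S : Set W) = 1 := by
  classical
  obtain ⟨i, x, w⟩ := z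
  refine ⟨(Finset.univ.filter
      (fun j => (w : Fin ((i : ℕ) + 1) → ℝ) j ≠ 0)).image (f ∘ x), ?_, ?_, ?_⟩
  · calc _ ≤ (Finset.univ.filter
          (fun j => (w : Fin ((i : ℕ) + 1) → ℝ) j ≠ 0)).card := Finset.card_image_le
      _ ≤ (Finset.univ : Finset (Fin ((i : ℕ) + 1))).card := Finset.card_filter_le _ _
      _ = (i : ℕ) + 1 := by rw [Finset.card_univ, Fintype.card_fin]
      _ ≤ n := i.2
  · intro y hy
    simp only [Finset.coe_image, Set.mem_image, Finset.mem_coe, Finset.mem_filter,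
      Finset.mem_univ, true_and, Function.comp_apply] at hy
    obtain ⟨j, hj, rfl⟩ := hy
    refine ⟨x j, ?_, rfl⟩
    have h1 := wts_le_mass (⟨i, (x, w)⟩ : rawP n Z) j
    have h2 : (0 : ℝ) < (w : Fin ((i : ℕ) + 1) → ℝ) j := (w.2.1 j).lt_of_ne (Ne.symm hj)
    exact ne_of_gt (lt_of_lt_of_le h2 h1)
  · rw [rawMeas_apply]
    dsimp only [pushRaw, Function.comp_apply]
    trans ∑ j : Fin ((i : ℕ) + 1), ENNReal.ofReal ((w : Fin ((i : ℕ) + 1) → ℝ) j)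
    · refine Finset.sum_congr rfl fun j _ => ?_
      by_cases hj : (w : Fin ((i : ℕ) + 1) → ℝ) j = 0
      · rw [hj]
        rw [ENNReal.ofReal_zero]
        exact (@ite_eq_right_iff _ _ (Classical.propDecidable _) _ _).mpr fun _ => ENNReal.ofReal_eq_zero.mpr hj.le
      · refine if_pos ?_
        simp only [Finset.coe_image, Set.mem_image, Finset.mem_coe, Finset.mem_filter,
          Finset.mem_univ, true_and, Function.comp_apply]
        exact ⟨j, hj, rfl⟩
    · rw [← ENNReal.ofReal_sum_of_nonneg (fun j _ => stdSimplex.zero_le w j), stdSimplex.sum_eq_one, ENNReal.ofReal_one]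

/-- Pushing a formal measure to an honest finitely-supported measure in `B_n(W)`. -/
noncomputable def pushMeas {n : ℕ} (f : Z → W) (hfi : Function.Injective f)
    (μ : PmeasA n Z) : Bmeas n W := by
  letI : MeasurableSpace W := borel W
  haveI : BorelSpace W := ⟨rfl⟩
  refine ⟨Quotient.lift (fun z => rawLP (pushRaw f z))
    (fun z z' h => rawLP_congr (mass_push_congr hfi h)) μ, ?_⟩
  obtain ⟨z, rfl⟩ := Quotient.exists_rep μ
  obtain ⟨S, hcard, _, hS1⟩ := rawLP_support f z
  refine ⟨S, hcard, ?_⟩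
  have : ((LevyProkhorov.toMeasureEquiv (rawLP (pushRaw f z)) :
      MeasureTheory.ProbabilityMeasure W) (S : Set W) : ENNReal) = 1 := by
    rw [MeasureTheory.ProbabilityMeasure.ennreal_coeFn_eq_coeFn_toMeasure]
    exact hS1
  exact_mod_cast this

lemma continuous_pushMeas {n : ℕ} (f : Z → W) (hfi : Function.Injective f)
    (hfc : Continuous f) : Continuous (pushMeas (n := n) f hfi) := by
  letI : MeasurableSpace W := borel W
  haveI : BorelSpace W := ⟨rfl⟩
  apply Continuous.subtype_mk
  exact Continuous.quotient_lift ((continuous_rawLP n).comp (continuous_pushRaw hfc)) _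

lemma pushMeas_distributedOn {n : ℕ} (f : Z → W) (hfi : Function.Injective f)
    (μ : PmeasA n Z) (A : Set W) (hA : ∀ x : Z, PmeasA.mass μ x ≠ 0 → f x ∈ A) :
    DistributedOn (pushMeas f hfi μ) A := by
  letI : MeasurableSpace W := borel W
  haveI : BorelSpace W := ⟨rfl⟩
  obtain ⟨z, rfl⟩ := Quotient.exists_rep μ
  obtain ⟨S, _, hsub, hS1⟩ := rawLP_support f z
  refine ⟨S, ?_, ?_⟩
  · intro w hw
    obtain ⟨x, hx, rfl⟩ := hsub hw
    exact hA x hx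
  · have : ((Bmeas.meas (pushMeas f hfi (Quotient.mk (Psetoid n Z) z))) (S : Set W)
        : ENNReal) = 1 := by
      rw [MeasureTheory.ProbabilityMeasure.ennreal_coeFn_eq_coeFn_toMeasure]
      exact hS1
    exact_mod_cast this

/-- The defining property of `phiMap`. -/
lemma phiMap_spec {n : ℕ} {Z' Y : Type*} [TopologicalSpace Z'] (pr : Z' → Y)
    (μ : PmeasFib n pr) :
    ∀ x, PmeasA.mass μ.1 x ≠ 0 → pr x = phiMap n pr μ :=
  Classical.choose_spec μ.2

/-- Uniqueness of the basepoint of a fiberwise distributed measure. -/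
lemma distributedOn_base_unique {k : ℕ} {E' B' : Type*} [MetricSpace E'] (p : E' → B')
    (μ : Bmeas k E') {b b' : B'} (h : DistributedOn μ (p ⁻¹' {b}))
    (h' : DistributedOn μ (p ⁻¹' {b'})) : b = b' := by
  letI : MeasurableSpace E' := borel E'
  haveI : BorelSpace E' := ⟨rfl⟩
  obtain ⟨S, hS, hS1⟩ := h
  obtain ⟨S', hS', hS1'⟩ := h'
  set ν := (Bmeas.meas μ).toMeasure with hν
  haveI : MeasureTheory.IsProbabilityMeasure ν := (Bmeas.meas μ).2
  have h1 : ν (S : Set E') = 1 := by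
    rw [hν, ← MeasureTheory.ProbabilityMeasure.ennreal_coeFn_eq_coeFn_toMeasure, hS1]
    rfl
  have h1' : ν (S' : Set E') = 1 := by
    rw [hν, ← MeasureTheory.ProbabilityMeasure.ennreal_coeFn_eq_coeFn_toMeasure, hS1']
    rfl
  have hmS : MeasurableSet (S : Set E') := S.finite_toSet.measurableSet
  have hmS' : MeasurableSet (S' : Set E') := S'.finite_toSet.measurableSet
  have hcS : ν (↑S : Set E')ᶜ = 0 := by
    rw [MeasureTheory.measure_compl hmS (by simp [h1]), h1, MeasureTheory.measure_univ,
      tsub_self]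
  have hcS' : ν (↑S' : Set E')ᶜ = 0 := by
    rw [MeasureTheory.measure_compl hmS' (by simp [h1']), h1', MeasureTheory.measure_univ,
      tsub_self]
  have hne : ν ((S : Set E') ∩ (S' : Set E')) ≠ 0 := by
    intro h0
    have hcompl : ν (((S : Set E') ∩ (S' : Set E'))ᶜ) = 0 := by
      rw [Set.compl_inter]
      exact le_antisymm ((MeasureTheory.measure_union_le _ _).trans
        (by rw [hcS, hcS', add_zero])) zero_le
    have : (1 : ENNReal) ≤ 0 := by
      calc (1 : ENNReal) = ν Set.univ := (MeasureTheory.measure_univ).symm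
        _ ≤ ν ((S : Set E') ∩ (S' : Set E'))
            + ν (((S : Set E') ∩ (S' : Set E'))ᶜ) := by
              rw [← Set.union_compl_self ((S : Set E') ∩ (S' : Set E'))]
              exact MeasureTheory.measure_union_le _ _
        _ = 0 := by rw [h0, hcompl, add_zero]
    simp at this
  obtain ⟨x, hx, hx'⟩ := MeasureTheory.nonempty_of_measure_ne_zero hne
  have e1 : p x = b := hS hx
  have e2 : p x = b' := hS' hx'
  rw [← e1, ← e2]

/-- `fibProj` equals any basepoint witnessing fiberwise distribution. -/
lemma fibProj_eq {k : ℕ} {E' B' : Type*} [MetricSpace E'] (p : E' → B') (μ : FibMeas k p)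
    {b : B'} (h : DistributedOn μ.1 (p ⁻¹' {b})) : fibProj k p μ = b :=
  (distributedOn_base_unique p μ.1 (Classical.choose_spec μ.2) h)


end Bridge

/-- For any Hurewicz fibration `p : E → B` of metric spaces, `dsecat(p) ≤ asecat(p)`.
Consequently, `dcat(X) ≤ acat(X)` and `dTC_m(X) ≤ ATC_m(X)` for all `m ≥ 2`, where
`acat(X) = asecat(p₀)` and `ATC_m(X) = asecat(π_m)`. -/

theorem dsecat_le_asecat (E B : Type) [MetricSpace E] [MetricSpace B]
    (p : E → B) (hp : Continuous p) (hfib : IsHurFib p)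
    (X : Type) [MetricSpace X] [PathConnectedSpace X] (x₀ : X) (m : ℕ) (hm : 2 ≤ m) :
    dsecat p ≤ asecat p ∧
      dcat X ≤ asecat (pZero X x₀) ∧
      dTC m X ≤ asecat (piFib m X) := by
  refine ⟨sInf_le_sInf ?_, sInf_le_sInf ?_, sInf_le_sInf ?_⟩
  · -- dsecat ≤ asecat
    rintro c ⟨k, rfl, s, hs, hsec⟩
    refine ⟨k, rfl, ?_⟩
    have hdist : ∀ b, DistributedOn (pushMeas id Function.injective_id ((s b).1))
        (p ⁻¹' {b}) := by
      intro b
      apply pushMeas_distributedOn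
      intro x hx
      have h1 := phiMap_spec p (s b) x hx
      rw [hsec b] at h1
      simp only [id_eq, Set.mem_preimage, Set.mem_singleton_iff]
      exact h1
    refine ⟨fun b => ⟨pushMeas id Function.injective_id ((s b).1), b, hdist b⟩, ?_, ?_⟩
    · exact Continuous.subtype_mk
        ((continuous_pushMeas id Function.injective_id continuous_id).comp
          (continuous_subtype_val.comp hs)) _
    · intro b
      exact fibProj_eq p _ (hdist b)
  · -- dcat ≤ acat
    rintro c ⟨k, rfl, s, hs, hsec⟩
    refine ⟨k, rfl, x₀,
      fun y => pushMeas (Subtype.val) Subtype.val_injective ((s y).1), ?_, ?_⟩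
    · exact (continuous_pushMeas _ Subtype.val_injective continuous_subtype_val).comp
        hs.subtype_val
    · intro y
      apply pushMeas_distributedOn
      intro ψ hψ
      have h1 := phiMap_spec (pZero X x₀) (s y) ψ hψ
      rw [hsec y] at h1
      exact ⟨h1, ψ.2⟩
  · -- dTC ≤ ATC
    rintro c ⟨k, rfl, s, hs, hsec⟩
    refine ⟨k, rfl, fun x => pushMeas id Function.injective_id ((s x).1), ?_, ?_⟩
    · exact (continuous_pushMeas id Function.injective_id continuous_id).comp
        (continuous_subtype_val.comp hs)
    · intro x
      apply pushMeas_distributedOn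
      intro φ hφ
      have h1 := phiMap_spec (piFib m X) (s x) φ hφ
      rw [hsec x] at h1
      intro j
      exact congrFun h1 j
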